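/- Let T be a finite tree with at least two vertices, equipped with a nonnegative edge-length function ℓ, and suppose (T, ℓ) is short-branched. Then for every pair of distinct vertices u, v of T, the deviation D(u,v) is greater than or equal to zero. -/

import Mathlib

open scoped Classical
open Finset

noncomputable section

variable {V : Type*}

/-- A leaf of a graph is a vertex of degree one. -/
def IsLeafVertex [Fintype V] (G : SimpleGraph V) (v : V) : Prop := G.degree v = 1

/-- The finset of leaves of a graph. -/
def leafSet [Fintype V] (G : SimpleGraph V) : Finset V :=
  Finset.univ.filter (fun v => IsLeafVertex G v)

/-- The length of a pseudometric graph: the sum of the lengths of its edges. -/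
def totalLength [Fintype V] (G : SimpleGraph V) (ℓ : Sym2 V → ℝ) : ℝ :=
  ∑ e ∈ G.edgeFinset, ℓ e

/-- The leaf length of a tree: one less than its number of leaves. -/
def leafLength [Fintype V] (G : SimpleGraph V) : ℝ := ((leafSet G).card : ℝ) - 1

/-- `sideComp G u v` is the vertex set of the connected component containing `v` of the
graph obtained from `G` by deleting the vertex `u`: the set of vertices reachable from
`v` by a walk avoiding `u`. -/
def sideComp (G : SimpleGraph V) (u v : V) : Set V :=
  {x | ∃ p : G.Walk v x, u ∉ p.support}

/-- The length of the subspace `T(u,v)`: the sum of the lengths of all edges having at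
least one endpoint in `sideComp G u v`. -/
def sideLength [Fintype V] (G : SimpleGraph V) (ℓ : Sym2 V → ℝ) (u v : V) : ℝ :=
  ∑ e ∈ G.edgeFinset.filter (fun e => ∃ x ∈ e, x ∈ sideComp G u v), ℓ e

/-- The leaf length of the subspace `T(u,v)`: the number of leaves of `G` lying in
`sideComp G u v`. -/
def sideLeafCount [Fintype V] (G : SimpleGraph V) (u v : V) : ℕ :=
  ((leafSet G).filter (fun x => x ∈ sideComp G u v)).card

/-- The deviation `D(u,v)`: the leaf length of `T(u,v)` minus the length of `T(u,v)`. -/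
def deviation [Fintype V] (G : SimpleGraph V) (ℓ : Sym2 V → ℝ) (u v : V) : ℝ :=
  (sideLeafCount G u v : ℝ) - sideLength G ℓ u v

/-- The length of the branch at `(u,w)`: `ℓ {u,w}` plus the sum of the lengths of all
edges with both endpoints in `sideComp G u w`. -/
def branchLength [Fintype V] (G : SimpleGraph V) (ℓ : Sym2 V → ℝ) (u w : V) : ℝ :=
  ℓ s(u, w) + ∑ e ∈ G.edgeFinset.filter (fun e => ∀ x ∈ e, x ∈ sideComp G u w), ℓ e

/-- A pseudometric tree is short-branched if its length equals its leaf length and the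
length of every branch (at a vertex of degree at least 3) is at most its leaf length. -/
def ShortBranched [Fintype V] (G : SimpleGraph V) (ℓ : Sym2 V → ℝ) : Prop :=
  totalLength G ℓ = leafLength G ∧
  ∀ u w : V, 3 ≤ G.degree u → G.Adj u w →
    branchLength G ℓ u w ≤ (sideLeafCount G u w : ℝ)

/-- The product of the factors `D(vᵢ, vᵢ₊₁)/(1 − D(vᵢ₊₁, vᵢ))` along a list of vertices;
applied to the support of the unique path from `v` to `w` this gives the barycentric
coordinate `a(v,w)`. -/
def pathProd [Fintype V] (G : SimpleGraph V) (ℓ : Sym2 V → ℝ) : List V → ℝ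
  | a :: b :: rest =>
      (deviation G ℓ a b / (1 - deviation G ℓ b a)) * pathProd G ℓ (b :: rest)
  | _ => 1


section DevAux

open SimpleGraph Walk

variable {G : SimpleGraph V} {u v w x y a : V}

lemma SC.mem_self (h : u ≠ v) : v ∈ sideComp G u v :=
  ⟨SimpleGraph.Walk.nil, by simpa using h⟩

lemma SC.not_mem : u ∉ sideComp G u v := fun ⟨p, hp⟩ => hp p.end_mem_support

lemma SC.mem_adj (hx : x ∈ sideComp G u v) (hadj : G.Adj x y) (hy : y ≠ u) :
    y ∈ sideComp G u v := by
  obtain ⟨p, hp⟩ := hx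
  refine ⟨p.concat hadj, ?_⟩
  rw [SimpleGraph.Walk.support_concat]
  simp only [List.concat_eq_append, List.mem_append, List.mem_singleton]
  rintro (h | h)
  · exact hp h
  · exact hy h.symm

lemma SC.eq_of_walk {p : G.Walk v w} (hp : u ∉ p.support) :
    sideComp G u v = sideComp G u w := by
  ext x
  constructor
  · rintro ⟨q, hq⟩
    refine ⟨p.reverse.append q, ?_⟩
    rw [SimpleGraph.Walk.mem_support_append_iff]
    simp only [SimpleGraph.Walk.support_reverse, List.mem_reverse]
    tauto
  · rintro ⟨q, hq⟩
    refine ⟨p.append q, ?_⟩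
    rw [SimpleGraph.Walk.mem_support_append_iff]
    tauto

lemma SC.mem_of_support {p : G.Walk v w} (hp : u ∉ p.support) (hx : x ∈ p.support) :
    x ∈ sideComp G u v :=
  ⟨p.takeUntil x hx, fun h => hp (p.support_takeUntil_subset hx h)⟩

/-- key acyclicity lemma: a vertex of the side component adjacent to `u` must be `v`. -/
lemma SC.eq_of_adj (hT : G.IsTree) (huv : G.Adj u v) (ha : a ∈ sideComp G u v)
    (hau : G.Adj a u) : a = v := by
  obtain ⟨p, hp⟩ := ha
  have hq : p.bypass.IsPath := p.bypass_isPath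
  have hu : u ∉ p.bypass.support := fun h => hp (p.support_bypass_subset h)
  set q := p.bypass with hqdef
  have hr2 : (SimpleGraph.Walk.cons hau.symm q.reverse).IsPath := by
    rw [SimpleGraph.Walk.cons_isPath_iff]
    refine ⟨hq.reverse, ?_⟩
    rwa [SimpleGraph.Walk.support_reverse, List.mem_reverse]
  have hr1 : (SimpleGraph.Walk.cons huv SimpleGraph.Walk.nil : G.Walk u v).IsPath := by
    simp [huv.ne]
  have heq := hT.IsAcyclic.path_unique ⟨_, hr1⟩ ⟨_, hr2⟩
  have hlen := congrArg (fun P : G.Path u v => P.1.length) heq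
  simp only [SimpleGraph.Walk.length_cons, SimpleGraph.Walk.length_nil,
    SimpleGraph.Walk.length_reverse] at hlen
  have hz : q.length = 0 := by omega
  exact (SimpleGraph.Walk.eq_of_length_eq_zero hz).symm

variable [Fintype V] {ℓ : Sym2 V → ℝ}

lemma filter_side_eq (hT : G.IsTree) (huv : G.Adj u v) :
    G.edgeFinset.filter (fun e => ∃ x ∈ e, x ∈ sideComp G u v)
      = insert s(u,v) (G.edgeFinset.filter (fun e => ∀ x ∈ e, x ∈ sideComp G u v)) := by
  ext e
  refine Sym2.ind (fun a b => ?_) e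
  simp only [Finset.mem_insert, Finset.mem_filter, SimpleGraph.mem_edgeFinset,
    Sym2.mem_iff, SimpleGraph.mem_edgeSet]
  constructor
  · rintro ⟨hab, x, (rfl | rfl), hx⟩
    · by_cases hb : b = u
      · subst hb
        exact Or.inl (by rw [SC.eq_of_adj hT huv hx hab, Sym2.eq_swap])
      · refine Or.inr ⟨hab, ?_⟩
        rintro z (rfl | rfl)
        · exact hx
        · exact SC.mem_adj hx hab hb
    · by_cases ha : a = u
      · subst ha
        exact Or.inl (by rw [SC.eq_of_adj hT huv hx hab.symm])
      · refine Or.inr ⟨hab, ?_⟩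
        rintro z (rfl | rfl)
        · exact SC.mem_adj hx hab.symm ha
        · exact hx
  · rintro (heq | ⟨hab, hall⟩)
    · rcases Sym2.eq_iff.mp heq with ⟨rfl, rfl⟩ | ⟨rfl, rfl⟩
      · exact ⟨huv, b, Or.inr rfl, SC.mem_self huv.ne⟩
      · exact ⟨huv.symm, a, Or.inl rfl, SC.mem_self huv.ne⟩
    · exact ⟨hab, a, Or.inl rfl, hall a (Or.inl rfl)⟩

lemma sideLength_eq_branch (hT : G.IsTree) (huv : G.Adj u v) :
    sideLength G ℓ u v = branchLength G ℓ u v := by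
  unfold sideLength branchLength
  rw [filter_side_eq hT huv, Finset.sum_insert]
  intro h
  rw [Finset.mem_filter] at h
  exact SC.not_mem (h.2 u (by simp))

lemma sideComp_of_degree_one (hT : G.IsTree) (huv : G.Adj u v) (hd : G.degree u = 1) :
    sideComp G u v = {x | x ≠ u} := by
  ext x
  simp only [Set.mem_setOf_eq]
  constructor
  · intro hx
    rintro rfl
    exact SC.not_mem hx
  · intro hx
    obtain ⟨p0⟩ := hT.isConnected.preconnected v x
    set p := p0.bypass with hpdef
    have hp : p.IsPath := p0.bypass_isPath
    by_cases hu : u ∈ p.support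
    · exfalso
      have hnb : ∀ z, G.Adj u z → z = v := by
        intro z hz
        obtain ⟨a, ha⟩ := Finset.card_eq_one.mp
          (by rw [← hd]; rfl : (G.neighborFinset u).card = 1)
        have hzv : z ∈ G.neighborFinset u := by rwa [SimpleGraph.mem_neighborFinset]
        have hvv : v ∈ G.neighborFinset u := by rwa [SimpleGraph.mem_neighborFinset]
        rw [ha, Finset.mem_singleton] at hzv hvv
        rw [hzv, hvv]
      obtain ⟨z, hz, r, hr⟩ :=
        (p.dropUntil u hu).exists_eq_cons_of_ne (Ne.symm hx)
      have hzv : z = v := hnb z hz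
      have h2 : z ∈ (p.dropUntil u hu).support.tail := by
        rw [hr]
        simp
      rw [hzv] at h2
      have h3 : v ∈ (p.takeUntil u hu).support := SimpleGraph.Walk.start_mem_support _
      have h4 : p.support.Nodup := hp.support_nodup
      rw [← SimpleGraph.Walk.take_spec p hu, SimpleGraph.Walk.support_append] at h4
      exact List.disjoint_of_nodup_append h4 h3 h2
    · exact ⟨p, hu⟩

lemma deviation_degree_one (hT : G.IsTree) (hsb : ShortBranched G ℓ)
    (huv : G.Adj u v) (hd : G.degree u = 1) : deviation G ℓ u v = 0 := by
  have hC := sideComp_of_degree_one hT huv hd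
  have huleaf : u ∈ leafSet G := by rw [leafSet, Finset.mem_filter]; exact ⟨Finset.mem_univ _, hd⟩
  have hleaf : (leafSet G).filter (fun x => x ∈ sideComp G u v) = (leafSet G).erase u := by
    ext x
    simp only [Finset.mem_filter, Finset.mem_erase, hC, Set.mem_setOf_eq]
    tauto
  have hedge : G.edgeFinset.filter (fun e => ∃ x ∈ e, x ∈ sideComp G u v)
      = G.edgeFinset := by
    apply Finset.filter_true_of_mem
    intro e he
    revert he
    refine Sym2.ind (fun a b he => ?_) e
    rw [SimpleGraph.mem_edgeFinset, SimpleGraph.mem_edgeSet] at he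
    rcases eq_or_ne a u with rfl | ha
    · exact ⟨b, by simp, by rw [hC]; exact he.ne'⟩
    · exact ⟨a, by simp, by rw [hC]; exact ha⟩
  have hcard : 1 ≤ (leafSet G).card := Finset.card_pos.mpr ⟨u, huleaf⟩
  have h1 := hsb.1
  unfold totalLength leafLength at h1
  unfold deviation sideLeafCount sideLength
  rw [hleaf, hedge, Finset.card_erase_of_mem huleaf, Nat.cast_sub hcard]
  push_cast
  linarith

lemma degree_two_step (hT : G.IsTree) (huv : G.Adj u v) (hd : G.degree u = 2) :
    ∃ w, G.Adj u w ∧ sideComp G w u = insert u (sideComp G u v) ∧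
      deviation G ℓ u v = deviation G ℓ w u + ℓ s(u,w) ∧ s(u,w) ∈ G.edgeSet := by
  have hvmem : v ∈ G.neighborFinset u := by rwa [SimpleGraph.mem_neighborFinset]
  obtain ⟨w, hwmem, hwv⟩ := Finset.exists_mem_ne
    (by rw [show (G.neighborFinset u).card = G.degree u from rfl, hd]; omega) v
  have hw : G.Adj u w := (SimpleGraph.mem_neighborFinset G u w).mp hwmem
  have hnbeq : ({v, w} : Finset V) = G.neighborFinset u := by
    apply Finset.eq_of_subset_of_card_le
    · intro z hz
      rw [Finset.mem_insert, Finset.mem_singleton] at hz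
      rcases hz with rfl | rfl
      · exact hvmem
      · exact hwmem
    · rw [show (G.neighborFinset u).card = G.degree u from rfl, hd,
        Finset.card_insert_of_notMem (by simpa using (Ne.symm hwv)), Finset.card_singleton]
  have hnb : ∀ z, G.Adj u z → z = v ∨ z = w := by
    intro z hz
    have : z ∈ ({v, w} : Finset V) := by
      rw [hnbeq, SimpleGraph.mem_neighborFinset]; exact hz
    simpa using this
  have hwC : w ∉ sideComp G u v := fun h => hwv (SC.eq_of_adj hT huv h hw.symm)
  have hCC : sideComp G w u = insert u (sideComp G u v) := by
    ext x
    simp only [Set.mem_insert_iff]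
    constructor
    · intro hx
      by_cases hxu : x = u
      · exact Or.inl hxu
      right
      obtain ⟨p0, hp0⟩ := hx
      have hp : p0.bypass.IsPath := p0.bypass_isPath
      have hwp : w ∉ p0.bypass.support := fun h => hp0 (p0.support_bypass_subset h)
      obtain ⟨z, hz, r, hr⟩ := p0.bypass.exists_eq_cons_of_ne (Ne.symm hxu)
      have hzw : z ≠ w := by
        rintro rfl
        apply hwp
        rw [hr]
        simp
      have hzv : z = v := (hnb z hz).resolve_right hzw
      subst hzv
      refine ⟨r, ?_⟩
      rw [hr, SimpleGraph.Walk.cons_isPath_iff] at hp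
      exact hp.2
    · rintro (rfl | hx)
      · exact SC.mem_self hw.ne'
      · obtain ⟨p, hp⟩ := hx
        have hwp : w ∉ p.support := fun h => hwC (SC.mem_of_support hp h)
        refine ⟨SimpleGraph.Walk.cons huv p, ?_⟩
        rw [SimpleGraph.Walk.support_cons, List.mem_cons]
        push_neg
        exact ⟨hw.ne', hwp⟩
  have hudeg : u ∉ leafSet G := by
    rw [leafSet, Finset.mem_filter]; intro h; have h' := h.2; unfold IsLeafVertex at h'; omega
  have hleaf : (leafSet G).filter (fun x => x ∈ sideComp G w u)
      = (leafSet G).filter (fun x => x ∈ sideComp G u v) := by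
    ext x
    simp only [Finset.mem_filter, hCC, Set.mem_insert_iff]
    constructor
    · rintro ⟨hx, rfl | hx2⟩
      · exact absurd hx hudeg
      · exact ⟨hx, hx2⟩
    · rintro ⟨hx, hx2⟩
      exact ⟨hx, Or.inr hx2⟩
  have hedge : G.edgeFinset.filter (fun e => ∃ x ∈ e, x ∈ sideComp G w u)
      = insert s(u,w) (G.edgeFinset.filter (fun e => ∃ x ∈ e, x ∈ sideComp G u v)) := by
    ext e
    refine Sym2.ind (fun a b => ?_) e
    simp only [Finset.mem_insert, Finset.mem_filter, SimpleGraph.mem_edgeFinset,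
      Sym2.mem_iff, SimpleGraph.mem_edgeSet, hCC, Set.mem_insert_iff]
    constructor
    · rintro ⟨hab, z, (rfl | rfl), (rfl | hz)⟩
      · rcases hnb b hab with rfl | rfl
        · exact Or.inr ⟨hab, b, Or.inr rfl, SC.mem_self huv.ne⟩
        · exact Or.inl rfl
      · exact Or.inr ⟨hab, z, Or.inl rfl, hz⟩
      · rcases hnb a hab.symm with rfl | rfl
        · exact Or.inr ⟨hab, a, Or.inl rfl, SC.mem_self huv.ne⟩
        · exact Or.inl (Sym2.eq_swap)
      · exact Or.inr ⟨hab, z, Or.inr rfl, hz⟩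
    · rintro (heq | ⟨hab, z, hmem, hz⟩)
      · rcases Sym2.eq_iff.mp heq with ⟨rfl, rfl⟩ | ⟨rfl, rfl⟩
        · exact ⟨hw, a, Or.inl rfl, Or.inl rfl⟩
        · exact ⟨hw.symm, b, Or.inr rfl, Or.inl rfl⟩
      · exact ⟨hab, z, hmem, Or.inr hz⟩
  have hnotmem : s(u,w) ∉ G.edgeFinset.filter (fun e => ∃ x ∈ e, x ∈ sideComp G u v) := by
    rw [Finset.mem_filter]
    rintro ⟨-, z, hzmem, hz⟩
    rw [Sym2.mem_iff] at hzmem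
    rcases hzmem with rfl | rfl
    · exact SC.not_mem hz
    · exact hwC hz
  refine ⟨w, hw, hCC, ?_, (SimpleGraph.mem_edgeSet G).mpr hw⟩
  unfold deviation
  rw [show sideLeafCount G w u = sideLeafCount G u v from congrArg Finset.card hleaf]
  have hside : sideLength G ℓ w u = ℓ s(u,w) + sideLength G ℓ u v := by
    unfold sideLength
    rw [hedge, Finset.sum_insert hnotmem]
  rw [hside]
  ring

lemma adj_nonneg (hT : G.IsTree) (hℓ : ∀ e ∈ G.edgeSet, 0 ≤ ℓ e)
    (hsb : ShortBranched G ℓ) :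
    ∀ n : ℕ, ∀ u v : V, G.Adj u v →
      (Finset.univ.filter (fun x => x ∉ sideComp G u v)).card ≤ n →
      0 ≤ deviation G ℓ u v := by
  intro n
  induction n using Nat.strong_induction_on with
  | _ n ih =>
    intro u v huv hn
    by_cases h1 : G.degree u = 1
    · rw [deviation_degree_one hT hsb huv h1]
    by_cases h2 : G.degree u = 2
    · obtain ⟨w, hw, hCC, hdev, hedge⟩ := degree_two_step (ℓ := ℓ) hT huv h2
      have hsub : Finset.univ.filter (fun x => x ∉ sideComp G w u)
          ⊆ Finset.univ.filter (fun x => x ∉ sideComp G u v) := by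
        intro x hx
        rw [Finset.mem_filter] at hx ⊢
        refine ⟨Finset.mem_univ x, fun hc => hx.2 ?_⟩
        rw [hCC]
        exact Set.mem_insert_of_mem _ hc
      have hu1 : u ∈ Finset.univ.filter (fun x => x ∉ sideComp G u v) := by
        rw [Finset.mem_filter]
        exact ⟨Finset.mem_univ u, SC.not_mem⟩
      have hu2 : u ∉ Finset.univ.filter (fun x => x ∉ sideComp G w u) := by
        simp only [Finset.mem_filter, not_and, not_not]
        intro _
        rw [hCC]
        exact Set.mem_insert _ _
      have hlt : (Finset.univ.filter (fun x => x ∉ sideComp G w u)).card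
          < (Finset.univ.filter (fun x => x ∉ sideComp G u v)).card :=
        Finset.card_lt_card ((Finset.ssubset_iff_of_subset hsub).mpr ⟨u, hu1, hu2⟩)
      have hIH := ih _ (lt_of_lt_of_le hlt hn) w u hw.symm le_rfl
      have hℓ0 := hℓ _ hedge
      rw [hdev]
      linarith
    · have hdpos : 0 < G.degree u := by
        rw [SimpleGraph.degree_pos_iff_exists_adj]
        exact ⟨v, huv⟩
      have h3 : 3 ≤ G.degree u := by omega
      have hb := hsb.2 u v h3 huv
      unfold deviation
      rw [sideLength_eq_branch hT huv]
      linarith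

end DevAux

/-- **Deviations are nonnegative** (Lemma A.1 of the paper): in a short-branched tree,
`D(u,v) ≥ 0` for every pair of distinct vertices `u`, `v`. -/
theorem deviation_nonneg [Fintype V] [DecidableEq V] (G : SimpleGraph V)
    (ℓ : Sym2 V → ℝ) (hT : G.IsTree) (hV : 1 < Fintype.card V)
    (hℓ : ∀ e ∈ G.edgeSet, 0 ≤ ℓ e) (hsb : ShortBranched G ℓ)
    (u v : V) (huv : u ≠ v) :
    0 ≤ deviation G ℓ u v := by
  obtain ⟨p0⟩ := hT.isConnected.preconnected u v
  have hp : p0.bypass.IsPath := p0.bypass_isPath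
  obtain ⟨y, hy, r, hr⟩ := p0.bypass.exists_eq_cons_of_ne huv
  have hur : u ∉ r.support := by
    rw [hr, SimpleGraph.Walk.cons_isPath_iff] at hp
    exact hp.2
  have hceq : sideComp G u y = sideComp G u v := SC.eq_of_walk hur
  unfold deviation sideLeafCount sideLength
  rw [← hceq]
  exact adj_nonneg hT hℓ hsb _ u y hy le_rfl
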